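/- Let M = (X,d) be a finite metric space and T_M a minimum spanning tree of the complete graph K_M on X with edge weights d(x,y). Then the weighted path metric of T_M coincides with d on all pairs of points (i.e., T_M is isometric to K_M) if and only if M satisfies both the four-point condition and the fourth-point condition. -/

import Mathlib

/-- The total weight of a walk in a graph, with respect to an edge-weight
function `w` on pairs of vertices. -/
def SimpleGraph.Walk.weight {V : Type*} {G : SimpleGraph V} (w : V → V → ℝ)
    {u v : V} (p : G.Walk u v) : ℝ :=
  (p.darts.map fun d => w d.toProd.1 d.toProd.2).sum

/-- The four-point condition for a metric space. -/
def FourPointCond (X : Type*) [MetricSpace X] : Prop :=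
  ∀ q r s t : X,
    dist q r + dist s t ≤ max (dist q s + dist r t) (dist r s + dist q t)

/-- The fourth-point condition for a metric space. -/
def FourthPointCond (X : Type*) [MetricSpace X] : Prop :=
  ∀ x y z : X, ∃ p : X,
    dist x p + dist y p + dist z p = (dist x y + dist y z + dist z x) / 2

/-- The total length of a graph on the point set of a metric space, where each edge
`xy` is weighted by `dist x y` (the edge weights of the complete graph `K_M`). -/
noncomputable def totalDist {X : Type*} [MetricSpace X] [Fintype X]
    (G : SimpleGraph X) : ℝ :=
  letI := Classical.decEq X
  letI : DecidableRel G.Adj := fun _ _ => Classical.dec _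
  ∑ e ∈ G.edgeFinset, Sym2.lift ⟨fun a b => dist a b, fun a b => dist_comm a b⟩ e

set_option linter.unusedSectionVars false

namespace MstAux
open SimpleGraph Walk

variable {X : Type} [MetricSpace X] {T : SimpleGraph X}

lemma weight_nil {w : X → X → ℝ} {x : X} :
    (Walk.nil : T.Walk x x).weight w = 0 := rfl

lemma weight_cons {w : X → X → ℝ} {x b y : X} (h : T.Adj x b) (q : T.Walk b y) :
    (Walk.cons h q).weight w = w x b + q.weight w := by
  simp [Walk.weight]

lemma weight_append {w : X → X → ℝ} {x y z : X} (p : T.Walk x y) (q : T.Walk y z) :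
    (p.append q).weight w = p.weight w + q.weight w := by
  simp [Walk.weight, Walk.darts_append]

/-- split a walk at the first vertex belonging to `S`. -/
lemma exists_split (S : Set X) : ∀ {x y : X} (p : T.Walk x y), y ∈ S →
    ∃ (m : X) (p1 : T.Walk x m) (p2 : T.Walk m y), p1.append p2 = p ∧ m ∈ S ∧
      ∀ v ∈ p1.support, v ∈ S → v = m := by
  intro x y p
  induction p with
  | nil =>
    intro hy
    exact ⟨_, Walk.nil, Walk.nil, rfl, hy, by intro v hv _; simpa using hv⟩
  | @cons a b c h q ih =>
    intro hy
    by_cases ha : a ∈ S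
    · exact ⟨a, Walk.nil, Walk.cons h q, rfl, ha, by intro v hv _; simpa using hv⟩
    · obtain ⟨m, p1, p2, happ, hm, hfirst⟩ := ih hy
      refine ⟨m, Walk.cons h p1, p2, by rw [Walk.cons_append, happ], hm, ?_⟩
      intro v hv hvS
      rcases (by simpa using hv : v = a ∨ v ∈ p1.support) with rfl | hv'
      · exact absurd hvS ha
      · exact hfirst v hv' hvS

section Forward

variable (hiso : ∀ x y : X, ∀ p : T.Walk x y, p.IsPath →
    p.weight (fun a b => dist a b) = dist x y)

include hiso

lemma between_of_mem {x y a : X} (p : T.Walk x y) (hp : p.IsPath) (ha : a ∈ p.support) :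
    dist x a + dist a y = dist x y := by
  classical
  have h1 := hiso _ _ _ (hp.takeUntil ha)
  have h2 := hiso _ _ _ (hp.dropUntil ha)
  calc dist x a + dist a y
      = (p.takeUntil a ha).weight (fun a b => dist a b)
        + (p.dropUntil a ha).weight (fun a b => dist a b) := by rw [h1, h2]
    _ = ((p.takeUntil a ha).append (p.dropUntil a ha)).weight (fun a b => dist a b) :=
        (weight_append _ _).symm
    _ = p.weight (fun a b => dist a b) := by rw [Walk.take_spec]
    _ = dist x y := hiso _ _ _ hp

lemma median_path (hT : T.IsTree) {a b : X} (P : T.Walk a b) (hP : P.IsPath) (c : X) :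
    ∃ m ∈ P.support, dist a m + dist m b = dist a b ∧ dist a m + dist m c = dist a c ∧
      dist b m + dist m c = dist b c := by
  classical
  obtain ⟨Q, hQ, -⟩ := hT.existsUnique_path b c
  obtain ⟨m, p1, p2, happ, hmQ, hfirst⟩ :=
    exists_split {v | v ∈ Q.support} P (by simp)
  have hmQ' : m ∈ Q.support := hmQ
  have hp1 : p1.IsPath := by
    rw [← happ] at hP; exact hP.of_append_left
  have hmP : m ∈ P.support := by
    rw [← happ, Walk.mem_support_append_iff]
    exact Or.inl p1.end_mem_support
  set q2 := Q.dropUntil m hmQ' with hq2def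
  have hq2p : q2.IsPath := hQ.dropUntil hmQ'
  have hq2nd : q2.support.Nodup := (Walk.isPath_def _).mp hq2p
  have hmtail : m ∉ q2.support.tail := by
    have := hq2nd
    rw [Walk.support_eq_cons] at this
    exact (List.nodup_cons.mp this).1
  have hR : (p1.append q2).IsPath := by
    rw [Walk.isPath_def, Walk.support_append]
    refine List.Nodup.append ((Walk.isPath_def _).mp hp1) ?_ ?_
    · have := hq2nd; rw [Walk.support_eq_cons] at this
      exact (List.nodup_cons.mp this).2
    · intro v hv1 hv2
      have hvQ : v ∈ Q.support :=
        Walk.support_dropUntil_subset Q hmQ' (List.tail_subset _ hv2)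
      have : v = m := hfirst v hv1 hvQ
      subst this
      exact hmtail hv2
  refine ⟨m, hmP, between_of_mem hiso P hP hmP, ?_, between_of_mem hiso Q hQ hmQ'⟩
  have h1 := hiso _ _ _ hp1
  have h2 := hiso _ _ _ hq2p
  have h3 := hiso _ _ _ hR
  rw [weight_append, h1, h2] at h3
  exact h3

omit hiso in
lemma fp_helper {q r s t a b : X}
    (h1 : dist q a + dist a r = dist q r) (h2 : dist q b + dist b r = dist q r)
    (h3 : dist r a + dist a s = dist r s) (h4 : dist q b + dist b t = dist q t)
    (h5 : dist q b = dist q a + dist a b) :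
    dist q r + dist s t ≤ dist r s + dist q t := by
  have t1 := dist_triangle s b t
  have t2 := dist_triangle s a b
  have c1 := dist_comm r a
  have c2 := dist_comm s a
  have c3 := dist_comm s b
  linarith

lemma forward_four (hT : T.IsTree) : FourPointCond X := by
  intro q r s t
  obtain ⟨P, hP, -⟩ := hT.existsUnique_path q r
  obtain ⟨a, haP, ha1, ha2, ha3⟩ := median_path hiso hT P hP s
  obtain ⟨b, hbP, hb1, hb2, hb3⟩ := median_path hiso hT P hP t
  classical
  have hdisj : dist q b = dist q a + dist a b ∨ dist q a = dist q b + dist b a := by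
    have hb' : b ∈ (P.takeUntil a haP).support ∨ b ∈ (P.dropUntil a haP).support := by
      have := hbP
      rw [← Walk.take_spec P haP, Walk.mem_support_append_iff] at this
      exact this
    rcases hb' with hb' | hb'
    · right
      have := between_of_mem hiso _ (hP.takeUntil haP) hb'
      linarith
    · left
      have h6 := between_of_mem hiso _ (hP.dropUntil haP) hb'
      have h7 := between_of_mem hiso P hP hbP
      linarith
  rcases hdisj with h5 | h5
  · refine le_trans (fp_helper ha1 hb1 ha3 hb2 h5) (le_max_right _ _)
  · have := fp_helper hb1 ha1 hb3 ha2 h5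
    have c1 := dist_comm s t
    have c2 := dist_comm r t
    have c3 := dist_comm q s
    refine le_trans (by linarith : dist q r + dist s t ≤ dist q s + dist r t)
      (le_max_left _ _)

lemma forward_fourth (hT : T.IsTree) : FourthPointCond X := by
  intro x y z
  obtain ⟨P, hP, -⟩ := hT.existsUnique_path x y
  obtain ⟨m, hmP, h1, h2, h3⟩ := median_path hiso hT P hP z
  refine ⟨m, ?_⟩
  have c1 := dist_comm m y
  have c2 := dist_comm m z
  have c3 := dist_comm z x
  linarith

end Forward
section Backward

lemma strict_median (h5 : FourthPointCond X) (x y z : X) :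
    ∃ m : X, dist x m + dist m y = dist x y ∧ dist y m + dist m z = dist y z ∧
      dist x m + dist m z = dist x z := by
  obtain ⟨p, hp⟩ := h5 x y z
  have t1 := dist_triangle x p y
  have t2 := dist_triangle y p z
  have t3 := dist_triangle x p z
  have c1 := dist_comm p y
  have c2 := dist_comm p z
  have c3 := dist_comm z x
  exact ⟨p, by linarith, by linarith, by linarith⟩

lemma reach_dich_aux (u v : X) : ∀ {x y : X} (_ : T.Walk x y),
    ((T \ SimpleGraph.fromEdgeSet {s(u,v)}).Reachable y u ∨
      (T \ SimpleGraph.fromEdgeSet {s(u,v)}).Reachable y v) →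
    ((T \ SimpleGraph.fromEdgeSet {s(u,v)}).Reachable x u ∨
      (T \ SimpleGraph.fromEdgeSet {s(u,v)}).Reachable x v) := by
  intro x y w
  induction w with
  | nil => exact id
  | @cons a b c h q ih =>
    intro hy
    by_cases hab : s(a, b) = s(u, v)
    · rcases Sym2.eq_iff.mp hab with ⟨rfl, rfl⟩ | ⟨rfl, rfl⟩
      · exact Or.inl (SimpleGraph.Reachable.refl _)
      · exact Or.inr (SimpleGraph.Reachable.refl _)
    · have hD : (T \ SimpleGraph.fromEdgeSet {s(u,v)}).Adj a b := by
        simp only [SimpleGraph.sdiff_adj, SimpleGraph.fromEdgeSet_adj, Set.mem_singleton_iff]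
        exact ⟨h, by tauto⟩
      rcases ih hy with h' | h'
      · exact Or.inl (hD.reachable.trans h')
      · exact Or.inr (hD.reachable.trans h')

lemma reach_dich (hconn : T.Connected) (u v : X) (x : X) :
    (T \ SimpleGraph.fromEdgeSet {s(u,v)}).Reachable x u ∨
      (T \ SimpleGraph.fromEdgeSet {s(u,v)}).Reachable x v := by
  obtain ⟨w⟩ := hconn.preconnected x u
  exact reach_dich_aux u v w (Or.inl (SimpleGraph.Reachable.refl u))

variable [Fintype X]

lemma totalDist_eq (G : SimpleGraph X) [Fintype G.edgeSet] :
    totalDist G = ∑ e ∈ G.edgeFinset,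
      Sym2.lift ⟨fun a b => Dist.dist a b, fun a b => dist_comm a b⟩ e := by
  unfold totalDist
  congr 1
  exact Finset.coe_injective (by simp)

lemma cut_aux (hT : T.IsTree)
    (hmst : ∀ G' : SimpleGraph X, G'.IsTree → totalDist T ≤ totalDist G')
    {u v : X} (huv : T.Adj u v) {p : X}
    (hpu : p ≠ u) (hpv : p ≠ v) (hbet : dist u p + dist p v = dist u v)
    (hreach : (T \ SimpleGraph.fromEdgeSet {s(u,v)}).Reachable p u) : False := by
  classical
  set D := T \ SimpleGraph.fromEdgeSet {s(u,v)} with hD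
  have hbr : T.IsBridge s(u, v) :=
    SimpleGraph.isAcyclic_iff_forall_adj_isBridge.mp hT.2 huv
  have hnr : ¬ D.Reachable u v := SimpleGraph.isBridge_iff.mp hbr
  have hsne : s(p, v) ≠ s(u, v) := by
    intro h
    rcases Sym2.eq_iff.mp h with ⟨h1, -⟩ | ⟨h1, -⟩
    · exact hpu h1
    · exact hpv h1
  have hnadj : ¬ T.Adj p v := by
    intro h
    have hDadj : D.Adj p v := by
      simp only [hD, SimpleGraph.sdiff_adj, SimpleGraph.fromEdgeSet_adj, Set.mem_singleton_iff]
      exact ⟨h, by tauto⟩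
    exact hnr (hreach.symm.trans hDadj.reachable)
  set T' := D ⊔ SimpleGraph.edge p v with hT'
  have hDle : D ≤ T' := le_sup_left
  have hpvT' : T'.Adj p v := by
    refine Or.inr ?_
    rw [SimpleGraph.edge_adj]
    exact ⟨Or.inl ⟨rfl, rfl⟩, hpv⟩
  have hconn : T'.Connected := by
    rw [SimpleGraph.connected_iff_exists_forall_reachable]
    refine ⟨v, fun w => ?_⟩
    rcases reach_dich hT.1 u v w with h | h
    · exact hpvT'.reachable.symm.trans ((hreach.mono hDle).trans (h.mono hDle).symm)
    · exact (h.mono hDle).symm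
  have hacy : T'.IsAcyclic := by
    intro w c hc
    by_cases hce : s(p, v) ∈ c.edges
    · have h1 : (T' \ SimpleGraph.fromEdgeSet {s(p,v)}).Reachable p v :=
        (SimpleGraph.adj_and_reachable_delete_edges_iff_exists_cycle.mpr ⟨w, c, hc, hce⟩).2
      have h2 : (T' \ SimpleGraph.fromEdgeSet {s(p,v)}) ≤ D := by
        intro a b hab
        simp only [SimpleGraph.sdiff_adj, SimpleGraph.fromEdgeSet_adj,
          Set.mem_singleton_iff] at hab
        obtain ⟨hab1, hab2⟩ := hab
        rcases hab1 with h' | h'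
        · exact h'
        · rw [SimpleGraph.edge_adj] at h'
          exfalso
          apply hab2
          refine ⟨?_, h'.2⟩
          rcases h'.1 with ⟨rfl, rfl⟩ | ⟨rfl, rfl⟩
          · rfl
          · exact Sym2.eq_swap
      exact hnr (hreach.symm.trans (h1.mono h2))
    · have hsub : ∀ e' ∈ c.edges, e' ∈ T.edgeSet := by
        intro e' he'
        have hmem := c.edges_subset_edgeSet he'
        rw [hT', SimpleGraph.edgeSet_sup] at hmem
        rcases hmem with hmem | hmem
        · rw [hD, SimpleGraph.edgeSet_sdiff] at hmem
          exact hmem.1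
        · rw [SimpleGraph.edge_edgeSet_of_ne hpv] at hmem
          exact absurd (hmem ▸ he') hce
      exact hT.2 (c.transfer T hsub) (hc.transfer hsub)
  have htree' : T'.IsTree := ⟨hconn, hacy⟩
  -- edge set computation
  have hpvT : s(p, v) ∉ T.edgeSet := hnadj
  have huvT : s(u, v) ∈ T.edgeSet := huv
  have hSet : T'.edgeSet = insert s(p,v) (T.edgeSet \ {s(u,v)}) := by
    rw [hT', hD, SimpleGraph.edgeSet_sup, SimpleGraph.edgeSet_sdiff,
      SimpleGraph.edge_edgeSet_of_ne hpv, SimpleGraph.edgeSet_fromEdgeSet]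
    ext e'
    simp only [Set.mem_union, Set.mem_diff, Set.mem_singleton_iff, Set.mem_insert_iff,
      Set.mem_setOf_eq]
    constructor
    · rintro (⟨h1, h2⟩ | h1)
      · right
        refine ⟨h1, ?_⟩
        intro rfl'
        exact h2 ⟨rfl', fun hd => (SimpleGraph.not_isDiag_of_mem_edgeSet T h1) (rfl' ▸ hd)⟩
      · exact Or.inl h1
    · rintro (rfl | ⟨h1, h2⟩)
      · exact Or.inr rfl
      · left
        exact ⟨h1, fun h => h2 h.1⟩
  have hFin : T'.edgeFinset = insert s(p,v) (T.edgeFinset.erase s(u,v)) := by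
    apply Finset.coe_injective
    simp [hSet]
  set f : Sym2 X → ℝ := Sym2.lift ⟨fun a b => Dist.dist a b, fun a b => dist_comm a b⟩ with hf
  have hsum : totalDist T' = totalDist T - dist u v + dist p v := by
    rw [totalDist_eq T', totalDist_eq T, hFin]
    rw [Finset.sum_insert (by
      simp only [Finset.mem_erase, SimpleGraph.mem_edgeFinset]
      rintro ⟨-, h⟩
      exact hpvT h)]
    rw [Finset.sum_erase_eq_sub (by simpa [SimpleGraph.mem_edgeFinset] using huvT)]
    simp only [Sym2.lift_mk]
    ring
  have hle := hmst T' htree'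
  have hup : 0 < dist u p := dist_pos.mpr (Ne.symm hpu)
  rw [hsum] at hle
  linarith

lemma cut (hT : T.IsTree)
    (hmst : ∀ G' : SimpleGraph X, G'.IsTree → totalDist T ≤ totalDist G')
    {u v : X} (huv : T.Adj u v) {m : X}
    (hbet : dist u m + dist m v = dist u v) : m = u ∨ m = v := by
  by_contra hc
  push_neg at hc
  obtain ⟨hmu, hmv⟩ := hc
  rcases reach_dich hT.1 u v m with h | h
  · exact cut_aux hT hmst huv hmu hmv hbet h
  · refine cut_aux hT hmst huv.symm hmv hmu ?_ ?_
    · rw [dist_comm v m, dist_comm m u, dist_comm v u]; linarith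
    · have hsw : s(v, u) = s(u, v) := Sym2.eq_swap
      rw [hsw]
      exact h

lemma backward (hT : T.IsTree)
    (hmst : ∀ G' : SimpleGraph X, G'.IsTree → totalDist T ≤ totalDist G')
    (h4 : FourPointCond X) (h5 : FourthPointCond X) :
    ∀ (n : ℕ) {x y : X} (p : T.Walk x y), p.IsPath → p.length = n →
      p.weight (fun a b => dist a b) = dist x y := by
  intro n
  induction n using Nat.strong_induction_on with
  | _ n ih =>
    intro x y p hp hlen
    cases p with
    | nil => simp [weight_nil, dist_self]
    | @cons _ b _ h q =>
      have hq : q.IsPath := hp.of_cons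
      have hqlen : q.length < n := by
        rw [← hlen, Walk.length_cons]; omega
      have hwq : q.weight (fun a b => dist a b) = dist b y := ih q.length hqlen q hq rfl
      suffices hkey : dist x b + dist b y = dist x y by
        rw [weight_cons, hwq, hkey]
      obtain ⟨m, hm1, hm2, hm3⟩ := strict_median h5 x b y
      rcases cut hT hmst h hm1 with hmx | hmb
      swap
      · rw [hmb] at hm3; exact hm3
      rw [hmx] at hm2 hm3
      -- bad case: m = x, so dist b x + dist x y = dist b y
      cases q with
      | nil => simp [dist_self]
      | @cons _ c _ h2 q' =>
        have hxsup : x ∉ (Walk.cons h2 q').support := by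
          rw [Walk.cons_isPath_iff] at hp
          exact hp.2
        have hxb : x ≠ b := by
          intro hxb
          subst hxb
          exact hxsup (Walk.start_mem_support _)
        have hxc : x ≠ c := by
          intro hxc
          exact hxsup (by rw [hxc]; simp [Walk.support_cons])
        cases q' with
        | nil =>
          rcases cut hT hmst h2 hm2 with h' | h'
          · exact absurd h' hxb
          · exact absurd h' hxc
        | @cons _ c2 _ h3 q'' =>
          exfalso
          have hq' : (Walk.cons h3 q'').IsPath := hq.of_cons
          have hn3 : 2 < n := by
            rw [← hlen]; simp only [Walk.length_cons]; omega
          have hwq' : (Walk.cons h3 q'').weight (fun a b => dist a b) = dist c y :=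
            ih _ (by rw [← hlen]; simp only [Walk.length_cons]; omega) _ hq' rfl
          have hdby : dist b y = dist b c + dist c y := by
            rw [← hwq, weight_cons, hwq']
          have hp2 : (Walk.cons h (Walk.cons h2 Walk.nil)).IsPath := by
            rw [Walk.isPath_def]
            simp [hxb, hxc, h2.ne]
          have hdxc : dist x c = dist x b + dist b c := by
            have := ih 2 hn3 (Walk.cons h (Walk.cons h2 Walk.nil)) hp2 (by simp)
            rw [weight_cons, weight_cons, weight_nil] at this
            linarith
          have hfp := h4 y b c x
          have pos1 : 0 < dist b c := dist_pos.mpr h2.ne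
          have pos2 : 0 < dist b x := dist_pos.mpr (Ne.symm hxb)
          have c1 := _root_.dist_comm x b
          have c2 := _root_.dist_comm x c
          have c3 := _root_.dist_comm x y
          have c4 := _root_.dist_comm b y
          have c5 := _root_.dist_comm b c
          have c6 := _root_.dist_comm c y
          rcases le_max_iff.mp hfp with hcase | hcase
          · linarith
          · linarith

end Backward

end MstAux

theorem mst_isometric_iff_four_point_and_fourth_point
    {X : Type} [MetricSpace X] [Fintype X] (T : SimpleGraph X) (hT : T.IsTree)
    (hmst : ∀ G' : SimpleGraph X, G'.IsTree → totalDist T ≤ totalDist G') :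
    (∀ x y : X, ∀ p : T.Walk x y, p.IsPath →
        p.weight (fun a b => dist a b) = dist x y)
      ↔ (FourPointCond X ∧ FourthPointCond X) := by
  constructor
  · intro hiso
    exact ⟨MstAux.forward_four hiso hT, MstAux.forward_fourth hiso hT⟩
  · rintro ⟨h4, h5⟩ x y p hp
    exact MstAux.backward hT hmst h4 h5 p.length p hp rfl
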